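/- Fix the MIBLP data as in the context. The inducible region IR is equal to the feasible set of the projection-based single-level formulation, namely the set of tuples (x^u, y^u, x^{l0}, y^{l0}) ∈ Ω such that for every nonnegative integer vector y ∈ ℤ^{nZ} with (x^u,y^u) ∈ Proj_{(x^u,y^u)} P(y), there exist x ∈ ℝ^{nR}, π ∈ ℝ^{nL}, x ≥ 0, π ≥ 0, satisfying the KKT conditions for the inner LP at (x^u, y^u, y) together with w_R·x^{l0} + w_Z·y^{l0} ≥ w_R·x + w_Z·y. Consequently, the infimum of the objective c_R·x^u + c_Z·y^u + d_R·x^{l0} + d_Z·y^{l0} over IR equals its infimum over the projection-based feasible set. -/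

import Mathlib

open Matrix Finset



open Matrix

noncomputable section

/-- Coercion of an integer vector into real space. -/
def cRv {n : ℕ} (y : Fin n → ℤ) : Fin n → ℝ := fun i => (y i : ℝ)

variable {mR mZ nR nZ nU nL : ℕ}

/-- The MIBLP constraint region Ω. -/
def OmegaSet (A_R : Matrix (Fin nU) (Fin mR) ℝ) (A_Z : Matrix (Fin nU) (Fin mZ) ℝ)
    (B_R : Matrix (Fin nU) (Fin nR) ℝ) (B_Z : Matrix (Fin nU) (Fin nZ) ℝ)
    (Q_R : Matrix (Fin nL) (Fin mR) ℝ) (Q_Z : Matrix (Fin nL) (Fin mZ) ℝ)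
    (P_R : Matrix (Fin nL) (Fin nR) ℝ) (P_Z : Matrix (Fin nL) (Fin nZ) ℝ)
    (r : Fin nU → ℝ) (s : Fin nL → ℝ) :
    Set ((Fin mR → ℝ) × (Fin mZ → ℤ) × (Fin nR → ℝ) × (Fin nZ → ℤ)) :=
  {p | 0 ≤ p.1 ∧ 0 ≤ p.2.1 ∧ 0 ≤ p.2.2.1 ∧ 0 ≤ p.2.2.2 ∧
    A_R *ᵥ p.1 + A_Z *ᵥ cRv p.2.1 + B_R *ᵥ p.2.2.1 + B_Z *ᵥ cRv p.2.2.2 ≤ r ∧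
    Q_R *ᵥ p.1 + Q_Z *ᵥ cRv p.2.1 + P_R *ᵥ p.2.2.1 + P_Z *ᵥ cRv p.2.2.2 ≤ s}

/-- The lower-level feasible region Ω_{(x^u,y^u)}. -/
def LowerFeas (Q_R : Matrix (Fin nL) (Fin mR) ℝ) (Q_Z : Matrix (Fin nL) (Fin mZ) ℝ)
    (P_R : Matrix (Fin nL) (Fin nR) ℝ) (P_Z : Matrix (Fin nL) (Fin nZ) ℝ)
    (s : Fin nL → ℝ) (xu : Fin mR → ℝ) (yu : Fin mZ → ℤ) :
    Set ((Fin nR → ℝ) × (Fin nZ → ℤ)) :=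
  {q | 0 ≤ q.1 ∧ 0 ≤ q.2 ∧
    P_R *ᵥ q.1 + P_Z *ᵥ cRv q.2 ≤ s - Q_R *ᵥ xu - Q_Z *ᵥ cRv yu}

/-- The inducible region IR. -/
def IRset (A_R : Matrix (Fin nU) (Fin mR) ℝ) (A_Z : Matrix (Fin nU) (Fin mZ) ℝ)
    (B_R : Matrix (Fin nU) (Fin nR) ℝ) (B_Z : Matrix (Fin nU) (Fin nZ) ℝ)
    (Q_R : Matrix (Fin nL) (Fin mR) ℝ) (Q_Z : Matrix (Fin nL) (Fin mZ) ℝ)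
    (P_R : Matrix (Fin nL) (Fin nR) ℝ) (P_Z : Matrix (Fin nL) (Fin nZ) ℝ)
    (w_R : Fin nR → ℝ) (w_Z : Fin nZ → ℝ) (r : Fin nU → ℝ) (s : Fin nL → ℝ) :
    Set ((Fin mR → ℝ) × (Fin mZ → ℤ) × (Fin nR → ℝ) × (Fin nZ → ℤ)) :=
  {p | p ∈ OmegaSet A_R A_Z B_R B_Z Q_R Q_Z P_R P_Z r s ∧
    (p.2.2.1, p.2.2.2) ∈ LowerFeas Q_R Q_Z P_R P_Z s p.1 p.2.1 ∧
    ∀ q ∈ LowerFeas Q_R Q_Z P_R P_Z s p.1 p.2.1,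
      w_R ⬝ᵥ q.1 + w_Z ⬝ᵥ cRv q.2 ≤ w_R ⬝ᵥ p.2.2.1 + w_Z ⬝ᵥ cRv p.2.2.2}

/-- Membership of (x^u,y^u) in Proj_{(x^u,y^u)} P(y). -/
def ProjMem (Q_R : Matrix (Fin nL) (Fin mR) ℝ) (Q_Z : Matrix (Fin nL) (Fin mZ) ℝ)
    (P_R : Matrix (Fin nL) (Fin nR) ℝ) (P_Z : Matrix (Fin nL) (Fin nZ) ℝ)
    (s : Fin nL → ℝ) (xu : Fin mR → ℝ) (yu : Fin mZ → ℤ) (y : Fin nZ → ℤ) : Prop :=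
  0 ≤ xu ∧ 0 ≤ yu ∧ 0 ≤ y ∧
    ∃ x : Fin nR → ℝ, 0 ≤ x ∧
      Q_R *ᵥ xu + Q_Z *ᵥ cRv yu + P_R *ᵥ x ≤ s - P_Z *ᵥ cRv y

/-- KKT conditions for the inner LP max{w_R·x : P_R x ≤ b, x ≥ 0},
where b = s − Q_R x^u − Q_Z y^u − P_Z y. -/
def KKTcond (Q_R : Matrix (Fin nL) (Fin mR) ℝ) (Q_Z : Matrix (Fin nL) (Fin mZ) ℝ)
    (P_R : Matrix (Fin nL) (Fin nR) ℝ) (P_Z : Matrix (Fin nL) (Fin nZ) ℝ)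
    (w_R : Fin nR → ℝ) (s : Fin nL → ℝ)
    (xu : Fin mR → ℝ) (yu : Fin mZ → ℤ) (y : Fin nZ → ℤ)
    (x : Fin nR → ℝ) (π : Fin nL → ℝ) : Prop :=
  0 ≤ x ∧ 0 ≤ π ∧
  P_R *ᵥ x ≤ s - Q_R *ᵥ xu - Q_Z *ᵥ cRv yu - P_Z *ᵥ cRv y ∧
  w_R ≤ P_Rᵀ *ᵥ π ∧
  (∀ i, x i * ((P_Rᵀ *ᵥ π) i - w_R i) = 0) ∧
  (∀ k, π k * ((s - Q_R *ᵥ xu - Q_Z *ᵥ cRv yu - P_Z *ᵥ cRv y) k - (P_R *ᵥ x) k) = 0)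

/-- The feasible set of the projection-based single-level formulation (P4). -/
def ProjFeasSet (A_R : Matrix (Fin nU) (Fin mR) ℝ) (A_Z : Matrix (Fin nU) (Fin mZ) ℝ)
    (B_R : Matrix (Fin nU) (Fin nR) ℝ) (B_Z : Matrix (Fin nU) (Fin nZ) ℝ)
    (Q_R : Matrix (Fin nL) (Fin mR) ℝ) (Q_Z : Matrix (Fin nL) (Fin mZ) ℝ)
    (P_R : Matrix (Fin nL) (Fin nR) ℝ) (P_Z : Matrix (Fin nL) (Fin nZ) ℝ)
    (w_R : Fin nR → ℝ) (w_Z : Fin nZ → ℝ) (r : Fin nU → ℝ) (s : Fin nL → ℝ) :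
    Set ((Fin mR → ℝ) × (Fin mZ → ℤ) × (Fin nR → ℝ) × (Fin nZ → ℤ)) :=
  {p | p ∈ OmegaSet A_R A_Z B_R B_Z Q_R Q_Z P_R P_Z r s ∧
    ∀ y : Fin nZ → ℤ, 0 ≤ y → ProjMem Q_R Q_Z P_R P_Z s p.1 p.2.1 y →
      ∃ (x : Fin nR → ℝ) (π : Fin nL → ℝ),
        KKTcond Q_R Q_Z P_R P_Z w_R s p.1 p.2.1 y x π ∧
        w_R ⬝ᵥ x + w_Z ⬝ᵥ cRv y ≤ w_R ⬝ᵥ p.2.2.1 + w_Z ⬝ᵥ cRv p.2.2.2}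


lemma farkas_cone {ι : Type*} [Fintype ι] :
    ∀ (k : ℕ) (v : Fin k → ι → ℝ) (b : ι → ℝ),
      (∃ y : Fin k → ℝ, (∀ i, 0 ≤ y i) ∧ ∑ i, y i • v i = b) ∨
      (∃ x : ι → ℝ, (∀ i, 0 ≤ x ⬝ᵥ v i) ∧ x ⬝ᵥ b < 0) := by
  intro k
  induction k with
  | zero =>
    intro v b
    by_cases hb : b = 0
    · exact Or.inl ⟨0, fun i => le_refl _, by simp [hb]⟩
    · refine Or.inr ⟨-b, fun i => i.elim0, ?_⟩
      have : (0:ℝ) < b ⬝ᵥ b := by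
        rcases lt_or_eq_of_le (dotProduct_self_star_nonneg b) with h | h
        · simpa using h
        · exact absurd (dotProduct_self_eq_zero.mp (by simpa using h.symm)) hb
      simpa [neg_dotProduct] using neg_neg_iff_pos.mpr this
  | succ k IH =>
    intro v b
    set v0 : ι → ℝ := v 0 with hv0
    set vt : Fin k → ι → ℝ := fun i => v i.succ with hvt
    rcases IH vt b with ⟨y, hy, hsum⟩ | ⟨x, hxv, hxb⟩
    · refine Or.inl ⟨Fin.cons 0 y, ?_, ?_⟩
      · intro i; induction i using Fin.cases with
        | zero => simp
        | succ j => simpa using hy j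
      · rw [Fin.sum_univ_succ]; simpa using hsum
    · by_cases h0 : 0 ≤ x ⬝ᵥ v0
      · refine Or.inr ⟨x, ?_, hxb⟩
        intro i; induction i using Fin.cases with
        | zero => exact h0
        | succ j => exact hxv j
      · push_neg at h0
        set α : ℝ := x ⬝ᵥ v0 with hα
        have hαne : α ≠ 0 := ne_of_lt h0
        set b' : ι → ℝ := b - ((x ⬝ᵥ b)/α) • v0 with hb'
        set vt' : Fin k → ι → ℝ := fun i => vt i - ((x ⬝ᵥ vt i)/α) • v0 with hvt'
        rcases IH vt' b' with ⟨y, hy, hsum⟩ | ⟨x', hx'v, hx'b⟩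
        · set μ : ℝ := (x ⬝ᵥ b)/α - ∑ i, y i * ((x ⬝ᵥ vt i)/α) with hμ
          have hμ0 : 0 ≤ μ := by
            have h1 : 0 < (x ⬝ᵥ b)/α := div_pos_of_neg_of_neg hxb h0
            have h2 : ∑ i, y i * ((x ⬝ᵥ vt i)/α) ≤ 0 := by
              apply Finset.sum_nonpos
              intro i _
              exact mul_nonpos_of_nonneg_of_nonpos (hy i)
                (div_nonpos_of_nonneg_of_nonpos (hxv i) h0.le)
            rw [hμ]; linarith
          refine Or.inl ⟨Fin.cons μ y, ?_, ?_⟩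
          · intro i; induction i using Fin.cases with
            | zero => simpa using hμ0
            | succ j => simpa using hy j
          · rw [Fin.sum_univ_succ]
            have hexp : ∑ i, y i • vt' i
                = ∑ i, y i • vt i - (∑ i, y i * ((x ⬝ᵥ vt i)/α)) • v0 := by
              rw [Finset.sum_smul]
              rw [← Finset.sum_sub_distrib]
              congr 1; ext i j
              simp [hvt', smul_sub, smul_smul]
              ring
            have : ∑ i, y i • vt i = b' + (∑ i, y i * ((x ⬝ᵥ vt i)/α)) • v0 := by
              rw [← hsum, hexp]; abel
            simp only [Fin.cons_zero, Fin.cons_succ]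
            rw [this, hb', hμ]
            module
        · refine Or.inr ⟨x' - ((x' ⬝ᵥ v0)/α) • x, ?_, ?_⟩
          · intro i; induction i using Fin.cases with
            | zero =>
              have : (x' - ((x' ⬝ᵥ v0)/α) • x) ⬝ᵥ v0 = 0 := by
                rw [sub_dotProduct, smul_dotProduct]
                rw [smul_eq_mul, ← hα, div_mul_cancel₀ _ hαne, sub_self]
              rw [this]
            | succ j =>
              have h1 := hx'v j
              have : (x' - ((x' ⬝ᵥ v0)/α) • x) ⬝ᵥ vt j = x' ⬝ᵥ vt' j := by
                simp only [hvt', sub_dotProduct, smul_dotProduct,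
                  dotProduct_sub, dotProduct_smul]
                field_simp
                ring
              exact le_of_le_of_eq h1 this.symm
          · have : (x' - ((x' ⬝ᵥ v0)/α) • x) ⬝ᵥ b = x' ⬝ᵥ b' := by
              simp only [hb', sub_dotProduct, smul_dotProduct,
                dotProduct_sub, dotProduct_smul]
              field_simp
              ring
            simpa [this] using hx'b

lemma farkas_cone' {ι κ : Type*} [Fintype ι] [Fintype κ] (v : κ → ι → ℝ) (b : ι → ℝ) :
    (∃ y : κ → ℝ, (∀ i, 0 ≤ y i) ∧ ∑ i, y i • v i = b) ∨
    (∃ x : ι → ℝ, (∀ i, 0 ≤ x ⬝ᵥ v i) ∧ x ⬝ᵥ b < 0) := by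
  obtain ⟨e⟩ : Nonempty (κ ≃ Fin (Fintype.card κ)) := ⟨Fintype.equivFin κ⟩
  rcases farkas_cone (Fintype.card κ) (fun i => v (e.symm i)) b with ⟨y, hy, hsum⟩ | h
  · refine Or.inl ⟨fun j => y (e j), fun j => hy (e j), ?_⟩
    rw [← hsum]
    exact Fintype.sum_equiv e _ _ (fun j => by simp)
  · exact Or.inr (by simpa [Equiv.forall_congr_left e.symm] using h)

/-- Farkas lemma, inequality form. -/
lemma farkas_ineq {ι κ : Type*} [Fintype ι] [Fintype κ] [DecidableEq ι]
    (A : Matrix ι κ ℝ) (c : ι → ℝ) :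
    (∃ x : κ → ℝ, (∀ j, 0 ≤ x j) ∧ A *ᵥ x ≤ c) ∨
    (∃ y : ι → ℝ, (∀ i, 0 ≤ y i) ∧ (∀ j, 0 ≤ (y ᵥ* A) j) ∧ c ⬝ᵥ y < 0) := by
  rcases farkas_cone' (ι := ι) (κ := κ ⊕ ι)
      (Sum.elim (fun j i => A i j) (fun i => Pi.single i 1)) c with ⟨y, hy, hsum⟩ | ⟨x, hxv, hxb⟩
  · refine Or.inl ⟨fun j => y (Sum.inl j), fun j => hy _, ?_⟩
    intro i
    have hsi := congrFun hsum i
    rw [Fintype.sum_sum_type] at hsi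
    rw [Pi.add_apply, Finset.sum_apply, Finset.sum_apply] at hsi
    simp only [Sum.elim_inl, Sum.elim_inr, Pi.smul_apply, smul_eq_mul] at hsi
    have h3 : ∑ i' : ι, y (Sum.inr i') * (Pi.single i' 1 : ι → ℝ) i = y (Sum.inr i) := by
      simp [Pi.single_apply]
    have h2 : ∑ j : κ, y (Sum.inl j) * A i j = (A *ᵥ fun j => y (Sum.inl j)) i := by
      simp [Matrix.mulVec, dotProduct, mul_comm]
    rw [h2, h3] at hsi
    have hnn := hy (Sum.inr i)
    linarith
  · refine Or.inr ⟨x, fun i => by simpa using hxv (Sum.inr i), ?_, by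
      rwa [dotProduct_comm]⟩
    intro j
    have := hxv (Sum.inl j)
    simpa [Matrix.vecMul, dotProduct] using this

lemma dot_le_dot_left {κ : Type*} [Fintype κ] {u a b : κ → ℝ}
    (hu : ∀ i, 0 ≤ u i) (hab : ∀ i, a i ≤ b i) : u ⬝ᵥ a ≤ u ⬝ᵥ b :=
  Finset.sum_le_sum fun i _ => mul_le_mul_of_nonneg_left (hab i) (hu i)

lemma dot_le_dot_right {κ : Type*} [Fintype κ] {u a b : κ → ℝ}
    (hu : ∀ i, 0 ≤ u i) (hab : ∀ i, a i ≤ b i) : a ⬝ᵥ u ≤ b ⬝ᵥ u :=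
  Finset.sum_le_sum fun i _ => mul_le_mul_of_nonneg_right (hab i) (hu i)

lemma sum_elim_vecMul {ι κ : Type*} [Fintype ι] [Fintype κ]
    (M : Matrix ι κ ℝ) (w : κ → ℝ) (y : ι ⊕ Unit → ℝ) (j : κ) :
    (y ᵥ* Matrix.of (Sum.elim M fun _ => w)) j
      = ((fun i => y (Sum.inl i)) ᵥ* M) j + y (Sum.inr ()) * w j := by
  simp [Matrix.vecMul, dotProduct, Fintype.sum_sum_type]
  rfl

lemma sum_elim_dot {ι : Type*} [Fintype ι] (b : ι → ℝ) (g : ℝ) (y : ι ⊕ Unit → ℝ) :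
    (Sum.elim b fun _ => g) ⬝ᵥ y = b ⬝ᵥ (fun i => y (Sum.inl i)) + g * y (Sum.inr ()) := by
  simp [dotProduct, Fintype.sum_sum_type]

/-- Weak duality. -/
lemma weak_duality {ι κ : Type*} [Fintype ι] [Fintype κ]
    (M : Matrix ι κ ℝ) (b : ι → ℝ) (w : κ → ℝ) (π : ι → ℝ) (x : κ → ℝ)
    (hπ : ∀ i, 0 ≤ π i) (hd : ∀ j, w j ≤ (Mᵀ *ᵥ π) j)
    (hx : ∀ j, 0 ≤ x j) (hp : M *ᵥ x ≤ b) : w ⬝ᵥ x ≤ b ⬝ᵥ π := by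
  have h1 : w ⬝ᵥ x ≤ (Mᵀ *ᵥ π) ⬝ᵥ x := dot_le_dot_right hx hd
  have h2 : (Mᵀ *ᵥ π) ⬝ᵥ x = π ⬝ᵥ (M *ᵥ x) := by
    rw [Matrix.mulVec_transpose, ← Matrix.dotProduct_mulVec]
  have h3 : π ⬝ᵥ (M *ᵥ x) ≤ π ⬝ᵥ b := dot_le_dot_left hπ fun i => hp i
  have h4 : π ⬝ᵥ b = b ⬝ᵥ π := dotProduct_comm _ _
  linarith

/-- Strong duality / existence of a KKT pair for a feasible bounded LP
`max {w ⬝ x : M x ≤ b, x ≥ 0}`. -/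
lemma lp_kkt {ι κ : Type*} [Fintype ι] [Fintype κ] [DecidableEq ι] [DecidableEq κ]
    (M : Matrix ι κ ℝ) (b : ι → ℝ) (w : κ → ℝ)
    (x₀ : κ → ℝ) (hx₀ : ∀ j, 0 ≤ x₀ j) (hfeas : M *ᵥ x₀ ≤ b)
    (C : ℝ) (hbdd : ∀ x : κ → ℝ, (∀ j, 0 ≤ x j) → M *ᵥ x ≤ b → w ⬝ᵥ x ≤ C) :
    ∃ (x : κ → ℝ) (π : ι → ℝ), (∀ j, 0 ≤ x j) ∧ (∀ k, 0 ≤ π k) ∧ M *ᵥ x ≤ b ∧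
      (∀ j, w j ≤ (Mᵀ *ᵥ π) j) ∧
      (∀ j, x j * ((Mᵀ *ᵥ π) j - w j) = 0) ∧
      (∀ k, π k * (b k - (M *ᵥ x) k) = 0) := by
  classical
  set S : Set ℝ := (fun x => w ⬝ᵥ x) '' {x | (∀ j, 0 ≤ x j) ∧ M *ᵥ x ≤ b} with hS
  have hSne : S.Nonempty := ⟨w ⬝ᵥ x₀, ⟨x₀, ⟨hx₀, hfeas⟩, rfl⟩⟩
  have hSbdd : BddAbove S := ⟨C, by rintro z ⟨x, ⟨hx1, hx2⟩, rfl⟩; exact hbdd x hx1 hx2⟩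
  set γ : ℝ := sSup S with hγ
  have hub : ∀ x : κ → ℝ, (∀ j, 0 ≤ x j) → M *ᵥ x ≤ b → w ⬝ᵥ x ≤ γ := by
    intro x h1 h2; exact le_csSup hSbdd ⟨x, ⟨h1, h2⟩, rfl⟩
  -- Step 1: primal attainment
  obtain ⟨xs, hxs0, hxsf, hxsv⟩ :
      ∃ x : κ → ℝ, (∀ j, 0 ≤ x j) ∧ M *ᵥ x ≤ b ∧ w ⬝ᵥ x = γ := by
    rcases farkas_ineq (ι := ι ⊕ Unit) (κ := κ) (Matrix.of (Sum.elim M fun _ => -w))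
        (Sum.elim b fun _ => -γ) with ⟨x, hx, hAx⟩ | ⟨y, hy, hvm, hcy⟩
    · refine ⟨x, hx, fun i => hAx (Sum.inl i), le_antisymm (hub x hx fun i => hAx (Sum.inl i)) ?_⟩
      have := hAx (Sum.inr ())
      simp only [Matrix.mulVec, Matrix.of_apply, Sum.elim_inr, Sum.elim_inl] at this
      have hne : (-w) ⬝ᵥ x ≤ -γ := this
      rw [neg_dotProduct] at hne
      linarith
    · exfalso
      set u : ι → ℝ := fun i => y (Sum.inl i) with hu
      set t : ℝ := y (Sum.inr ()) with ht
      have ht0 : 0 ≤ t := hy _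
      have hvm' : ∀ j, 0 ≤ (u ᵥ* M) j - t * w j := by
        intro j
        have := hvm j
        rw [sum_elim_vecMul] at this
        simpa [sub_eq_add_neg] using this
      have hcy' : b ⬝ᵥ u - γ * t < 0 := by
        have := hcy
        rw [sum_elim_dot] at this
        simpa [sub_eq_add_neg] using this
      rcases eq_or_lt_of_le ht0 with htz | htp
      · -- t = 0
        have h1 : 0 ≤ (u ᵥ* M) ⬝ᵥ x₀ :=
          Finset.sum_nonneg fun j _ => mul_nonneg (by have := hvm' j; rw [← htz] at this; simpa using this) (hx₀ j)
        have h2 : (u ᵥ* M) ⬝ᵥ x₀ = u ⬝ᵥ (M *ᵥ x₀) := (Matrix.dotProduct_mulVec u M x₀).symm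
        have h3 : u ⬝ᵥ (M *ᵥ x₀) ≤ u ⬝ᵥ b := dot_le_dot_left (fun i => hy _) fun i => hfeas i
        have h4 : u ⬝ᵥ b = b ⬝ᵥ u := dotProduct_comm _ _
        rw [← htz] at hcy'
        simp at hcy'
        linarith
      · -- t > 0
        have hπd : ∀ j, w j ≤ (Mᵀ *ᵥ fun i => u i / t) j := by
          intro j
          have := hvm' j
          have hexp : (Mᵀ *ᵥ fun i => u i / t) j = (u ᵥ* M) j / t := by
            simp [Matrix.mulVec_transpose, Matrix.vecMul, dotProduct,
              Finset.sum_div, div_mul_eq_mul_div]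
          rw [hexp]
          rw [le_div_iff₀ htp]
          linarith
        have hwd := fun x hx1 hx2 => weak_duality M b w (fun i => u i / t) x (fun i => div_nonneg (hy _) ht0) hπd hx1 hx2
        have hγle : γ ≤ b ⬝ᵥ (fun i => u i / t) := by
          apply csSup_le hSne
          rintro z ⟨x, ⟨hx1, hx2⟩, rfl⟩
          exact hwd x hx1 hx2
        have hbd : b ⬝ᵥ (fun i => u i / t) = (b ⬝ᵥ u) / t := by
          simp [dotProduct, Finset.sum_div, div_mul_eq_mul_div, mul_div_assoc]
        rw [hbd] at hγle
        rw [le_div_iff₀ htp] at hγle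
        linarith
  -- Step 2: dual existence
  obtain ⟨π, hπ0, hπd, hπv⟩ :
      ∃ π : ι → ℝ, (∀ i, 0 ≤ π i) ∧ (∀ j, w j ≤ (Mᵀ *ᵥ π) j) ∧ b ⬝ᵥ π ≤ γ := by
    rcases farkas_ineq (ι := κ ⊕ Unit) (κ := ι) (Matrix.of (Sum.elim (Mᵀ.map Neg.neg) fun _ => b))
        (Sum.elim (-w) fun _ => γ) with ⟨π, hπ, hAπ⟩ | ⟨y, hy, hvm, hcy⟩
    · refine ⟨π, hπ, ?_, ?_⟩
      · intro j
        have := hAπ (Sum.inl j)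
        simp only [Matrix.mulVec, Matrix.of_apply, Sum.elim_inl, Pi.neg_apply] at this
        have h2 : (Mᵀ.map Neg.neg j) ⬝ᵥ π = -((Mᵀ *ᵥ π) j) := by
          simp [Matrix.mulVec, dotProduct, Matrix.map_apply]
        replace this : (Mᵀ.map Neg.neg j) ⬝ᵥ π ≤ -w j := this
        rw [h2] at this
        linarith
      · have := hAπ (Sum.inr ())
        exact this
    · exfalso
      set vv : κ → ℝ := fun j => y (Sum.inl j) with hvv
      set t : ℝ := y (Sum.inr ()) with ht
      have ht0 : 0 ≤ t := hy _
      have hvm' : ∀ k, (M *ᵥ vv) k ≤ t * b k := by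
        intro k
        have := hvm k
        rw [sum_elim_vecMul] at this
        have hexp : ((fun j => y (Sum.inl j)) ᵥ* Mᵀ.map Neg.neg) k = -((M *ᵥ vv) k) := by
          simp [Matrix.vecMul, Matrix.mulVec, dotProduct, Matrix.map_apply, mul_comm]
          rfl
        rw [hexp] at this
        linarith
      have hcy' : t * γ < w ⬝ᵥ vv := by
        have := hcy
        rw [sum_elim_dot] at this
        rw [neg_dotProduct] at this
        linarith [mul_comm γ t]
      rcases eq_or_lt_of_le ht0 with htz | htp
      · -- t = 0 : ray of unboundedness
        have hray : M *ᵥ (xs + vv) ≤ b := by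
          intro k
          have h1 : (M *ᵥ (xs + vv)) k = (M *ᵥ xs) k + (M *ᵥ vv) k := by
            rw [Matrix.mulVec_add]; rfl
          have := hvm' k
          rw [← htz] at this
          simp at this
          have := hxsf k
          simp only [h1]
          linarith [hvm' k, hxsf k]
        have hge : w ⬝ᵥ (xs + vv) ≤ γ := hub _ (fun j => add_nonneg (hxs0 j) (hy _)) hray
        rw [dotProduct_add] at hge
        rw [← htz] at hcy'
        simp at hcy'
        linarith
      · -- t > 0 : better feasible point
        have hfe : M *ᵥ (fun j => vv j / t) ≤ b := by
          intro k
          have hexp : (M *ᵥ fun j => vv j / t) k = (M *ᵥ vv) k / t := by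
            simp [Matrix.mulVec, dotProduct, Finset.sum_div, mul_div_assoc]
          rw [hexp, div_le_iff₀ htp]
          linarith [hvm' k, mul_comm (b k) t]
        have hval : γ < w ⬝ᵥ (fun j => vv j / t) := by
          have hexp : w ⬝ᵥ (fun j => vv j / t) = (w ⬝ᵥ vv) / t := by
            simp [dotProduct, Finset.sum_div, mul_div_assoc]
          rw [hexp, lt_div_iff₀ htp]
          linarith [mul_comm γ t]
        have := hub _ (fun j => div_nonneg (hy _) ht0) hfe
        linarith
  -- Step 3: complementary slackness
  have heq1 : w ⬝ᵥ xs ≤ (Mᵀ *ᵥ π) ⬝ᵥ xs := dot_le_dot_right hxs0 hπd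
  have heq2 : (Mᵀ *ᵥ π) ⬝ᵥ xs = π ⬝ᵥ (M *ᵥ xs) := by
    rw [Matrix.mulVec_transpose, ← Matrix.dotProduct_mulVec]
  have heq3 : π ⬝ᵥ (M *ᵥ xs) ≤ π ⬝ᵥ b := dot_le_dot_left hπ0 fun i => hxsf i
  have heq4 : π ⬝ᵥ b = b ⬝ᵥ π := dotProduct_comm _ _
  have hall : (Mᵀ *ᵥ π) ⬝ᵥ xs = w ⬝ᵥ xs ∧ π ⬝ᵥ (M *ᵥ xs) = π ⬝ᵥ b := by
    constructor <;> (rw [hxsv] at *; linarith)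
  refine ⟨xs, π, hxs0, hπ0, hxsf, hπd, ?_, ?_⟩
  · have hz : ∑ j, xs j * ((Mᵀ *ᵥ π) j - w j) = 0 := by
      have : (Mᵀ *ᵥ π) ⬝ᵥ xs - w ⬝ᵥ xs = ∑ j, xs j * ((Mᵀ *ᵥ π) j - w j) := by
        simp [dotProduct, ← Finset.sum_sub_distrib]
        congr 1; ext j; ring
      rw [← this, hall.1]; ring
    intro j
    have := (Finset.sum_eq_zero_iff_of_nonneg (fun j _ =>
      mul_nonneg (hxs0 j) (by linarith [hπd j]))).mp hz j (Finset.mem_univ j)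
    exact this
  · have hz : ∑ k, π k * (b k - (M *ᵥ xs) k) = 0 := by
      have : π ⬝ᵥ b - π ⬝ᵥ (M *ᵥ xs) = ∑ k, π k * (b k - (M *ᵥ xs) k) := by
        simp [dotProduct, ← Finset.sum_sub_distrib]
        congr 1; ext k; ring
      rw [← this, hall.2]; ring
    intro k
    exact (Finset.sum_eq_zero_iff_of_nonneg (fun k _ =>
      mul_nonneg (hπ0 k) (by linarith [hxsf k]))).mp hz k (Finset.mem_univ k)

lemma dot_eq_of_slack {κ : Type*} [Fintype κ] {u a b : κ → ℝ}
    (h : ∀ j, u j * (a j - b j) = 0) : u ⬝ᵥ a = u ⬝ᵥ b := by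
  have h1 : u ⬝ᵥ a - u ⬝ᵥ b = ∑ j, u j * (a j - b j) := by
    simp only [dotProduct, ← Finset.sum_sub_distrib]
    congr 1; ext j; ring
  have h2 : ∑ j, u j * (a j - b j) = 0 := Finset.sum_eq_zero fun j _ => h j
  linarith [h1, h2]

theorem IR_eq_ProjFeas {mR mZ nR nZ nU nL : ℕ}
    (A_R : Matrix (Fin nU) (Fin mR) ℝ) (A_Z : Matrix (Fin nU) (Fin mZ) ℝ)
    (B_R : Matrix (Fin nU) (Fin nR) ℝ) (B_Z : Matrix (Fin nU) (Fin nZ) ℝ)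
    (Q_R : Matrix (Fin nL) (Fin mR) ℝ) (Q_Z : Matrix (Fin nL) (Fin mZ) ℝ)
    (P_R : Matrix (Fin nL) (Fin nR) ℝ) (P_Z : Matrix (Fin nL) (Fin nZ) ℝ)
    (w_R : Fin nR → ℝ) (w_Z : Fin nZ → ℝ) (r : Fin nU → ℝ) (s : Fin nL → ℝ) :
    IRset A_R A_Z B_R B_Z Q_R Q_Z P_R P_Z w_R w_Z r s =
      ProjFeasSet A_R A_Z B_R B_Z Q_R Q_Z P_R P_Z w_R w_Z r s := by
  ext p
  obtain ⟨xu, yu, xl, yl⟩ := p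
  constructor
  · rintro ⟨hΩ, hLF, hopt⟩
    refine ⟨hΩ, ?_⟩
    intro y hy hproj
    obtain ⟨hxu0, hyu0, hy0, x₀, hx₀, hcon⟩ := hproj
    set b : Fin nL → ℝ := s - Q_R *ᵥ xu - Q_Z *ᵥ cRv yu - P_Z *ᵥ cRv y with hb
    have hfeas : P_R *ᵥ x₀ ≤ b := by
      intro k
      have := hcon k
      simp only [Pi.add_apply, Pi.sub_apply, hb] at *
      linarith
    have hbdd : ∀ x : Fin nR → ℝ, (∀ j, 0 ≤ x j) → P_R *ᵥ x ≤ b →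
        w_R ⬝ᵥ x ≤ (w_R ⬝ᵥ xl + w_Z ⬝ᵥ cRv yl) - w_Z ⬝ᵥ cRv y := by
      intro x hx1 hx2
      have hlf : (x, y) ∈ LowerFeas Q_R Q_Z P_R P_Z s xu yu := by
        refine ⟨fun j => hx1 j, hy, ?_⟩
        intro k
        have := hx2 k
        simp only [Pi.add_apply, Pi.sub_apply, hb] at *
        linarith
      have hv : w_R ⬝ᵥ x + w_Z ⬝ᵥ cRv y ≤ w_R ⬝ᵥ xl + w_Z ⬝ᵥ cRv yl := hopt (x, y) hlf
      linarith
    obtain ⟨x, π, hx0, hπ0, hxf, hdual, hcs1, hcs2⟩ :=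
      lp_kkt P_R b w_R x₀ (fun j => hx₀ j) hfeas _ hbdd
    refine ⟨x, π, ⟨fun j => hx0 j, fun k => hπ0 k, hxf, fun j => hdual j, hcs1, hcs2⟩, ?_⟩
    have := hbdd x hx0 hxf
    linarith
  · rintro ⟨hΩ, hk⟩
    obtain ⟨hxu0, hyu0, hxl0, hyl0, hA, hQ⟩ := hΩ
    refine ⟨⟨hxu0, hyu0, hxl0, hyl0, hA, hQ⟩, ⟨hxl0, hyl0, ?_⟩, ?_⟩
    · intro k
      have := hQ k
      simp only [Pi.add_apply, Pi.sub_apply] at *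
      linarith
    · rintro ⟨x', y'⟩ ⟨hx'0, hy'0, hq3⟩
      have hproj : ProjMem Q_R Q_Z P_R P_Z s xu yu y' := by
        refine ⟨hxu0, hyu0, hy'0, x', hx'0, ?_⟩
        intro k
        have := hq3 k
        simp only [Pi.add_apply, Pi.sub_apply] at *
        linarith
      obtain ⟨x, π, ⟨hx0, hπ0, hxf, hdual, hcs1, hcs2⟩, hle⟩ := hk y' hy'0 hproj
      set b : Fin nL → ℝ := s - Q_R *ᵥ xu - Q_Z *ᵥ cRv yu - P_Z *ᵥ cRv y' with hb
      have hx'feas : P_R *ᵥ x' ≤ b := by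
        intro k
        have := hq3 k
        simp only [Pi.add_apply, Pi.sub_apply, hb] at *
        linarith
      have step1 : w_R ⬝ᵥ x' ≤ (P_Rᵀ *ᵥ π) ⬝ᵥ x' :=
        dot_le_dot_right (fun j => hx'0 j) (fun j => hdual j)
      have step2 : (P_Rᵀ *ᵥ π) ⬝ᵥ x' = π ⬝ᵥ (P_R *ᵥ x') := by
        rw [Matrix.mulVec_transpose, ← Matrix.dotProduct_mulVec]
      have step3 : π ⬝ᵥ (P_R *ᵥ x') ≤ π ⬝ᵥ b :=
        dot_le_dot_left (fun k => hπ0 k) (fun k => hx'feas k)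
      have step4 : π ⬝ᵥ b = π ⬝ᵥ (P_R *ᵥ x) := dot_eq_of_slack hcs2
      have step5 : π ⬝ᵥ (P_R *ᵥ x) = (P_Rᵀ *ᵥ π) ⬝ᵥ x := by
        rw [Matrix.mulVec_transpose, ← Matrix.dotProduct_mulVec]
      have step6 : (P_Rᵀ *ᵥ π) ⬝ᵥ x = w_R ⬝ᵥ x := by
        have : x ⬝ᵥ (P_Rᵀ *ᵥ π) = x ⬝ᵥ w_R :=
          dot_eq_of_slack (fun j => hcs1 j)
        rw [dotProduct_comm, this, dotProduct_comm]
      have hle' : w_R ⬝ᵥ x + w_Z ⬝ᵥ cRv y' ≤ w_R ⬝ᵥ xl + w_Z ⬝ᵥ cRv yl := hle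
      show w_R ⬝ᵥ x' + w_Z ⬝ᵥ cRv y' ≤ w_R ⬝ᵥ xl + w_Z ⬝ᵥ cRv yl
      linarith

/-- Theorem 1: the inducible region equals the feasible set of
the projection-based single-level formulation; consequently the infima of the
objective over the two sets coincide. -/
theorem stmt_1
    (mR mZ nR nZ nU nL : ℕ)
    (A_R : Matrix (Fin nU) (Fin mR) ℝ) (A_Z : Matrix (Fin nU) (Fin mZ) ℝ)
    (B_R : Matrix (Fin nU) (Fin nR) ℝ) (B_Z : Matrix (Fin nU) (Fin nZ) ℝ)
    (Q_R : Matrix (Fin nL) (Fin mR) ℝ) (Q_Z : Matrix (Fin nL) (Fin mZ) ℝ)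
    (P_R : Matrix (Fin nL) (Fin nR) ℝ) (P_Z : Matrix (Fin nL) (Fin nZ) ℝ)
    (c_R : Fin mR → ℝ) (c_Z : Fin mZ → ℝ) (d_R : Fin nR → ℝ) (d_Z : Fin nZ → ℝ)
    (w_R : Fin nR → ℝ) (w_Z : Fin nZ → ℝ) (r : Fin nU → ℝ) (s : Fin nL → ℝ) :
    IRset A_R A_Z B_R B_Z Q_R Q_Z P_R P_Z w_R w_Z r s =
      ProjFeasSet A_R A_Z B_R B_Z Q_R Q_Z P_R P_Z w_R w_Z r s ∧
    sInf ((fun p : (Fin mR → ℝ) × (Fin mZ → ℤ) × (Fin nR → ℝ) × (Fin nZ → ℤ) =>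
        ((c_R ⬝ᵥ p.1 + c_Z ⬝ᵥ cRv p.2.1 + d_R ⬝ᵥ p.2.2.1 + d_Z ⬝ᵥ cRv p.2.2.2 : ℝ) : EReal))
        '' IRset A_R A_Z B_R B_Z Q_R Q_Z P_R P_Z w_R w_Z r s) =
    sInf ((fun p : (Fin mR → ℝ) × (Fin mZ → ℤ) × (Fin nR → ℝ) × (Fin nZ → ℤ) =>
        ((c_R ⬝ᵥ p.1 + c_Z ⬝ᵥ cRv p.2.1 + d_R ⬝ᵥ p.2.2.1 + d_Z ⬝ᵥ cRv p.2.2.2 : ℝ) : EReal))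
        '' ProjFeasSet A_R A_Z B_R B_Z Q_R Q_Z P_R P_Z w_R w_Z r s) := by
  refine ⟨IR_eq_ProjFeas A_R A_Z B_R B_Z Q_R Q_Z P_R P_Z w_R w_Z r s, ?_⟩
  rw [IR_eq_ProjFeas]
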